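/- For all real numbers Ω, A, B, D, α, the vorticity function ω(θ,φ) = Ω·cosθ + A·√(5/(16π))·(3cos²θ − 1) + B·√(15/(16π))·sin(2θ)·cos(φ + α) + D·√(15/(16π))·sin²θ·cos(2φ) satisfies ∫_{S²} ω³ dS = (A·(10A² + 15B² − 30D² + 56Ω²π) + 15√3·B²·D·cos(2α)) / (14√(5π)). -/
import Mathlib

open Real MeasureTheory intervalIntegral

/-- The vorticity used in the zonal case, in spherical coordinates:
`Ω cosθ + A √(5/(16π))(3cos²θ − 1) + B √(15/(16π)) sin(2θ) cos(φ + α)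
 + D √(15/(16π)) sin²θ cos(2φ)`. -/
noncomputable def vortZ (Ω A B D α θ φ : ℝ) : ℝ :=
  Ω * Real.cos θ +
  A * (Real.sqrt (5 / (16 * π)) * (3 * (Real.cos θ) ^ 2 - 1)) +
  B * (Real.sqrt (15 / (16 * π)) * Real.sin (2 * θ) * Real.cos (φ + α)) +
  D * (Real.sqrt (15 / (16 * π)) * (Real.sin θ) ^ 2 * Real.cos (2 * φ))

lemma myZodd (m k : ℕ) : (∫ θ in (0:ℝ)..π, Real.sin θ ^ m * Real.cos θ ^ (2*k+1)) = 0 := by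
  rw [integral_sin_pow_mul_cos_pow_odd]
  simp

lemma myIodd (m n : ℕ) : (∫ θ in (0:ℝ)..π, Real.sin θ ^ (2*m+1) * Real.cos θ ^ n)
    = ∫ u in (-1:ℝ)..1, u ^ n * (1 - u^2)^m := by
  rw [integral_sin_pow_odd_mul_cos_pow]
  norm_num

lemma myU00 : (∫ u in (-1:ℝ)..1, u ^ 0 * (1 - u^2)^0) = 2 := by
  norm_num [integral_pow]

lemma myU02 : (∫ u in (-1:ℝ)..1, u ^ 2 * (1 - u^2)^0) = 2/3 := by
  norm_num [integral_pow]

lemma myU04 : (∫ u in (-1:ℝ)..1, u ^ 4 * (1 - u^2)^0) = 2/5 := by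
  norm_num [integral_pow]

lemma myU06 : (∫ u in (-1:ℝ)..1, u ^ 6 * (1 - u^2)^0) = 2/7 := by
  norm_num [integral_pow]

lemma myU10 : (∫ u in (-1:ℝ)..1, u ^ 0 * (1 - u^2)^1) = 4/3 := by
  have h : ∀ u:ℝ, u ^ (0:ℕ) * (1 - u^2)^(1:ℕ) = (1:ℝ) * u ^ 0 + (-1:ℝ) * u ^ 2 := fun u => by ring
  simp only [h]
  iterate 1 rw [intervalIntegral.integral_add]
  · simp only [intervalIntegral.integral_const_mul, integral_pow]; norm_num
  all_goals apply Continuous.intervalIntegrable; fun_prop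

lemma myU12 : (∫ u in (-1:ℝ)..1, u ^ 2 * (1 - u^2)^1) = 4/15 := by
  have h : ∀ u:ℝ, u ^ (2:ℕ) * (1 - u^2)^(1:ℕ) = (1:ℝ) * u ^ 2 + (-1:ℝ) * u ^ 4 := fun u => by ring
  simp only [h]
  iterate 1 rw [intervalIntegral.integral_add]
  · simp only [intervalIntegral.integral_const_mul, integral_pow]; norm_num
  all_goals apply Continuous.intervalIntegrable; fun_prop

lemma myU14 : (∫ u in (-1:ℝ)..1, u ^ 4 * (1 - u^2)^1) = 4/35 := by
  have h : ∀ u:ℝ, u ^ (4:ℕ) * (1 - u^2)^(1:ℕ) = (1:ℝ) * u ^ 4 + (-1:ℝ) * u ^ 6 := fun u => by ring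
  simp only [h]
  iterate 1 rw [intervalIntegral.integral_add]
  · simp only [intervalIntegral.integral_const_mul, integral_pow]; norm_num
  all_goals apply Continuous.intervalIntegrable; fun_prop

lemma myU20 : (∫ u in (-1:ℝ)..1, u ^ 0 * (1 - u^2)^2) = 16/15 := by
  have h : ∀ u:ℝ, u ^ (0:ℕ) * (1 - u^2)^(2:ℕ) = (1:ℝ) * u ^ 0 + (-2:ℝ) * u ^ 2 + (1:ℝ) * u ^ 4 := fun u => by ring
  simp only [h]
  iterate 2 rw [intervalIntegral.integral_add]
  · simp only [intervalIntegral.integral_const_mul, integral_pow]; norm_num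
  all_goals apply Continuous.intervalIntegrable; fun_prop

lemma myU22 : (∫ u in (-1:ℝ)..1, u ^ 2 * (1 - u^2)^2) = 16/105 := by
  have h : ∀ u:ℝ, u ^ (2:ℕ) * (1 - u^2)^(2:ℕ) = (1:ℝ) * u ^ 2 + (-2:ℝ) * u ^ 4 + (1:ℝ) * u ^ 6 := fun u => by ring
  simp only [h]
  iterate 2 rw [intervalIntegral.integral_add]
  · simp only [intervalIntegral.integral_const_mul, integral_pow]; norm_num
  all_goals apply Continuous.intervalIntegrable; fun_prop

lemma myU30 : (∫ u in (-1:ℝ)..1, u ^ 0 * (1 - u^2)^3) = 32/35 := by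
  have h : ∀ u:ℝ, u ^ (0:ℕ) * (1 - u^2)^(3:ℕ) = (1:ℝ) * u ^ 0 + (-3:ℝ) * u ^ 2 + (3:ℝ) * u ^ 4 + (-1:ℝ) * u ^ 6 := fun u => by ring
  simp only [h]
  iterate 3 rw [intervalIntegral.integral_add]
  · simp only [intervalIntegral.integral_const_mul, integral_pow]; norm_num
  all_goals apply Continuous.intervalIntegrable; fun_prop

lemma myT10 : (∫ θ in (0:ℝ)..π, Real.sin θ ^ 1 * Real.cos θ ^ 0) = 2 := by
  have h : (∫ θ in (0:ℝ)..π, Real.sin θ ^ 1 * Real.cos θ ^ 0)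
      = ∫ u in (-1:ℝ)..1, u ^ 0 * (1 - u^2)^0 := myIodd 0 0
  rw [h, myU00]

lemma myT12 : (∫ θ in (0:ℝ)..π, Real.sin θ ^ 1 * Real.cos θ ^ 2) = 2/3 := by
  have h : (∫ θ in (0:ℝ)..π, Real.sin θ ^ 1 * Real.cos θ ^ 2)
      = ∫ u in (-1:ℝ)..1, u ^ 2 * (1 - u^2)^0 := myIodd 0 2
  rw [h, myU02]

lemma myT14 : (∫ θ in (0:ℝ)..π, Real.sin θ ^ 1 * Real.cos θ ^ 4) = 2/5 := by
  have h : (∫ θ in (0:ℝ)..π, Real.sin θ ^ 1 * Real.cos θ ^ 4)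
      = ∫ u in (-1:ℝ)..1, u ^ 4 * (1 - u^2)^0 := myIodd 0 4
  rw [h, myU04]

lemma myT16 : (∫ θ in (0:ℝ)..π, Real.sin θ ^ 1 * Real.cos θ ^ 6) = 2/7 := by
  have h : (∫ θ in (0:ℝ)..π, Real.sin θ ^ 1 * Real.cos θ ^ 6)
      = ∫ u in (-1:ℝ)..1, u ^ 6 * (1 - u^2)^0 := myIodd 0 6
  rw [h, myU06]

lemma myT30 : (∫ θ in (0:ℝ)..π, Real.sin θ ^ 3 * Real.cos θ ^ 0) = 4/3 := by
  have h : (∫ θ in (0:ℝ)..π, Real.sin θ ^ 3 * Real.cos θ ^ 0)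
      = ∫ u in (-1:ℝ)..1, u ^ 0 * (1 - u^2)^1 := myIodd 1 0
  rw [h, myU10]

lemma myT32 : (∫ θ in (0:ℝ)..π, Real.sin θ ^ 3 * Real.cos θ ^ 2) = 4/15 := by
  have h : (∫ θ in (0:ℝ)..π, Real.sin θ ^ 3 * Real.cos θ ^ 2)
      = ∫ u in (-1:ℝ)..1, u ^ 2 * (1 - u^2)^1 := myIodd 1 2
  rw [h, myU12]

lemma myT34 : (∫ θ in (0:ℝ)..π, Real.sin θ ^ 3 * Real.cos θ ^ 4) = 4/35 := by
  have h : (∫ θ in (0:ℝ)..π, Real.sin θ ^ 3 * Real.cos θ ^ 4)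
      = ∫ u in (-1:ℝ)..1, u ^ 4 * (1 - u^2)^1 := myIodd 1 4
  rw [h, myU14]

lemma myT50 : (∫ θ in (0:ℝ)..π, Real.sin θ ^ 5 * Real.cos θ ^ 0) = 16/15 := by
  have h : (∫ θ in (0:ℝ)..π, Real.sin θ ^ 5 * Real.cos θ ^ 0)
      = ∫ u in (-1:ℝ)..1, u ^ 0 * (1 - u^2)^2 := myIodd 2 0
  rw [h, myU20]

lemma myT52 : (∫ θ in (0:ℝ)..π, Real.sin θ ^ 5 * Real.cos θ ^ 2) = 16/105 := by
  have h : (∫ θ in (0:ℝ)..π, Real.sin θ ^ 5 * Real.cos θ ^ 2)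
      = ∫ u in (-1:ℝ)..1, u ^ 2 * (1 - u^2)^2 := myIodd 2 2
  rw [h, myU22]

lemma myT70 : (∫ θ in (0:ℝ)..π, Real.sin θ ^ 7 * Real.cos θ ^ 0) = 32/35 := by
  have h : (∫ θ in (0:ℝ)..π, Real.sin θ ^ 7 * Real.cos θ ^ 0)
      = ∫ u in (-1:ℝ)..1, u ^ 0 * (1 - u^2)^3 := myIodd 3 0
  rw [h, myU30]

lemma myZ11 : (∫ θ in (0:ℝ)..π, Real.sin θ ^ 1 * Real.cos θ ^ 1) = 0 := myZodd 1 0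
lemma myZ13 : (∫ θ in (0:ℝ)..π, Real.sin θ ^ 1 * Real.cos θ ^ 3) = 0 := myZodd 1 1
lemma myZ15 : (∫ θ in (0:ℝ)..π, Real.sin θ ^ 1 * Real.cos θ ^ 5) = 0 := myZodd 1 2
lemma myZ21 : (∫ θ in (0:ℝ)..π, Real.sin θ ^ 2 * Real.cos θ ^ 1) = 0 := myZodd 2 0
lemma myZ23 : (∫ θ in (0:ℝ)..π, Real.sin θ ^ 2 * Real.cos θ ^ 3) = 0 := myZodd 2 1
lemma myZ25 : (∫ θ in (0:ℝ)..π, Real.sin θ ^ 2 * Real.cos θ ^ 5) = 0 := myZodd 2 2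
lemma myZ31 : (∫ θ in (0:ℝ)..π, Real.sin θ ^ 3 * Real.cos θ ^ 1) = 0 := myZodd 3 0
lemma myZ33 : (∫ θ in (0:ℝ)..π, Real.sin θ ^ 3 * Real.cos θ ^ 3) = 0 := myZodd 3 1
lemma myZ41 : (∫ θ in (0:ℝ)..π, Real.sin θ ^ 4 * Real.cos θ ^ 1) = 0 := myZodd 4 0
lemma myZ43 : (∫ θ in (0:ℝ)..π, Real.sin θ ^ 4 * Real.cos θ ^ 3) = 0 := myZodd 4 1
lemma myZ51 : (∫ θ in (0:ℝ)..π, Real.sin θ ^ 5 * Real.cos θ ^ 1) = 0 := myZodd 5 0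
lemma myZ61 : (∫ θ in (0:ℝ)..π, Real.sin θ ^ 6 * Real.cos θ ^ 1) = 0 := myZodd 6 0

lemma myE1 : (∫ θ in (0:ℝ)..π, Real.sin (2*θ)^2) = π/2 := by
  have h := mul_integral_comp_mul_left (a:=(0:ℝ)) (b:=π) (c:=2) (f := fun x => Real.sin x ^ 2)
  norm_num [integral_sin_sq, Real.sin_two_pi, Real.cos_two_pi] at h
  linarith

lemma myE2 : (∫ θ in (0:ℝ)..π, Real.sin (2*θ)^2 * Real.cos (2*θ)) = 0 := by
  have h := mul_integral_comp_mul_left (a:=(0:ℝ)) (b:=π) (c:=2)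
    (f := fun x => Real.sin x ^ 2 * Real.cos x)
  norm_num [integral_sin_sq_mul_cos, Real.sin_two_pi] at h
  linarith

lemma myW22 : (∫ θ in (0:ℝ)..π, Real.sin θ ^ 2 * Real.cos θ ^ 2) = π/8 := by
  have h4 : Real.sin (4*π) = 0 := by
    rw [show (4:ℝ)*π = 2*π + 2*π by ring, Real.sin_add_two_pi, Real.sin_two_pi]
  rw [integral_sin_sq_mul_cos_sq, h4]
  norm_num

lemma myW24 : (∫ θ in (0:ℝ)..π, Real.sin θ ^ 2 * Real.cos θ ^ 4) = π/16 := by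
  have hpt : ∀ θ:ℝ, Real.sin θ ^ 2 * Real.cos θ ^ 4
      = (1/8)*(Real.sin (2*θ)^2) + (1/8)*(Real.sin (2*θ)^2 * Real.cos (2*θ)) := by
    intro θ; rw [Real.sin_two_mul, Real.cos_two_mul]; ring
  simp only [hpt]
  rw [intervalIntegral.integral_add]
  · rw [intervalIntegral.integral_const_mul, intervalIntegral.integral_const_mul, myE1, myE2]
    ring
  all_goals apply Continuous.intervalIntegrable; fun_prop

lemma myW42 : (∫ θ in (0:ℝ)..π, Real.sin θ ^ 4 * Real.cos θ ^ 2) = π/16 := by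
  have hc2 : ∀ x:ℝ, Real.cos (2*x) = 1 - 2*Real.sin x ^ 2 := fun x => by
    rw [Real.cos_two_mul']; linear_combination Real.sin_sq_add_cos_sq x
  have hpt : ∀ θ:ℝ, Real.sin θ ^ 4 * Real.cos θ ^ 2
      = (1/8)*(Real.sin (2*θ)^2) + (-(1/8))*(Real.sin (2*θ)^2 * Real.cos (2*θ)) := by
    intro θ; rw [Real.sin_two_mul, hc2]; ring
  simp only [hpt]
  rw [intervalIntegral.integral_add]
  · rw [intervalIntegral.integral_const_mul, intervalIntegral.integral_const_mul, myE1, myE2]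
    ring
  all_goals apply Continuous.intervalIntegrable; fun_prop

lemma myKey (a b c d : ℝ) :
    (∫ θ in (0:ℝ)..π, (a * Real.cos θ + b * (3 * Real.cos θ ^ 2 - 1)
      + c * Real.sin (2*θ) + d * Real.sin θ ^ 2) ^ 3 * Real.sin θ)
    = 8/5*a^2*b + 32/35*b^3 + 3*π/4*(a*b*c) + 4/5*a^2*d + 16/7*b^2*d + 32/35*b*c^2
      - 64/35*b*d^2 + 3*π/4*(a*c*d) + 64/35*c^2*d + 32/35*d^3 := by
  have hpt : ∀ θ:ℝ, (a * Real.cos θ + b * (3 * Real.cos θ ^ 2 - 1)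
      + c * Real.sin (2*θ) + d * Real.sin θ ^ 2) ^ 3 * Real.sin θ
      = (-(b^3)) * (Real.sin θ ^ 1 * Real.cos θ ^ 0) + (3 * a * b^2) * (Real.sin θ ^ 1 * Real.cos θ ^ 1) + (-(3 * a^2 * b)+9 * b^3) * (Real.sin θ ^ 1 * Real.cos θ ^ 2) + (a^3-18 * a * b^2) * (Real.sin θ ^ 1 * Real.cos θ ^ 3) + (9 * a^2 * b-27 * b^3) * (Real.sin θ ^ 1 * Real.cos θ ^ 4) + (27 * a * b^2) * (Real.sin θ ^ 1 * Real.cos θ ^ 5) + (27 * b^3) * (Real.sin θ ^ 1 * Real.cos θ ^ 6) + (6 * b^2 * c) * (Real.sin θ ^ 2 * Real.cos θ ^ 1) + (-(12 * a * b * c)) * (Real.sin θ ^ 2 * Real.cos θ ^ 2) + (6 * a^2 * c-36 * b^2 * c) * (Real.sin θ ^ 2 * Real.cos θ ^ 3) + (36 * a * b * c) * (Real.sin θ ^ 2 * Real.cos θ ^ 4) + (54 * b^2 * c) * (Real.sin θ ^ 2 * Real.cos θ ^ 5) + (3 * b^2 * d) * (Real.sin θ ^ 3 * Real.cos θ ^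 0) + (-(6 * a * b * d)) * (Real.sin θ ^ 3 * Real.cos θ ^ 1) + (3 * a^2 * d-18 * b^2 * d-12 * b * c^2) * (Real.sin θ ^ 3 * Real.cos θ ^ 2) + (18 * a * b * d+12 * a * c^2) * (Real.sin θ ^ 3 * Real.cos θ ^ 3) + (27 * b^2 * d+36 * b * c^2) * (Real.sin θ ^ 3 * Real.cos θ ^ 4) + (-(12 * b * c * d)) * (Real.sin θ ^ 4 * Real.cos θ ^ 1) + (12 * a * c * d) * (Real.sin θ ^ 4 * Real.cos θ ^ 2) + (36 * b * c * d+8 * c^3) * (Real.sin θ ^ 4 * Real.cos θ ^ 3) + (-(3 * b * d^2)) * (Real.sin θ ^ 5 * Real.cos θ ^ 0) + (3 * a * d^2) * (Real.sin θ ^ 5 * Real.cos θ ^ 1) + (9 * b * d^2+12 * c^2 * d) * (Real.sin θ ^ 5 * Real.cos θ ^ 2) + (6 * c * d^2) * (Real.sin θ ^ 6 * Real.cos θ ^ 1) + (d^3) * (Real.sin θ ^ 7 * Real.cos θ ^ 0) := by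
    intro θ; rw [Real.sin_two_mul]; ring
  simp only [hpt]
  iterate 24 rw [intervalIntegral.integral_add]
  · simp only [intervalIntegral.integral_const_mul]
    rw [myT10, myZ11, myT12, myZ13, myT14, myZ15, myT16, myZ21, myW22, myZ23, myW24, myZ25, myT30, myZ31, myT32, myZ33, myT34, myZ41, myW42, myZ43, myT50, myZ51, myT52, myZ61, myT70]
    ring
  all_goals apply Continuous.intervalIntegrable; fun_prop



lemma myPer (x : ℝ) (n : ℕ) : Real.sin ((n:ℝ)*(2*π)+x) = Real.sin x := by
  rw [add_comm]; exact Real.sin_add_nat_mul_two_pi x n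

lemma myGc (c d : ℝ) (hc : c ≠ 0) (h : Real.sin (c*(2*π)+d) = Real.sin d) :
    (∫ φ in (0:ℝ)..(2*π), Real.cos (c*φ + d)) = 0 := by
  have h2 := mul_integral_comp_mul_add (a:=(0:ℝ)) (b:=2*π) (f := Real.cos) (c:=c) (d:=d)
  rw [integral_cos] at h2
  simp only [mul_zero, zero_add] at h2
  rw [h, sub_self] at h2
  exact (mul_eq_zero.mp h2).resolve_left hc

lemma myGc0 (c : ℝ) (hc : c ≠ 0) (h : Real.sin (c*(2*π)) = 0) :
    (∫ φ in (0:ℝ)..(2*π), Real.cos (c*φ)) = 0 := by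
  have h2 := mul_integral_comp_mul_left (a:=(0:ℝ)) (b:=2*π) (f := Real.cos) (c:=c)
  rw [integral_cos] at h2
  simp only [mul_zero, Real.sin_zero, sub_zero] at h2
  rw [h] at h2
  exact (mul_eq_zero.mp h2).resolve_left hc

lemma myP1 (α : ℝ) : (∫ φ in (0:ℝ)..(2*π), Real.cos (φ + α)) = 0 := by
  have h := myGc 1 α one_ne_zero (by simpa using myPer α 1)
  simpa using h

lemma myP2 : (∫ φ in (0:ℝ)..(2*π), Real.cos (2*φ)) = 0 :=
  myGc0 2 two_ne_zero (by simpa using myPer 0 2)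

lemma myP4' : (∫ φ in (0:ℝ)..(2*π), Real.cos (4*φ)) = 0 :=
  myGc0 4 (by norm_num) (by simpa using myPer 0 4)

lemma myP7' : (∫ φ in (0:ℝ)..(2*π), Real.cos (6*φ)) = 0 :=
  myGc0 6 (by norm_num) (by simpa using myPer 0 6)

lemma myP3 (α : ℝ) : (∫ φ in (0:ℝ)..(2*π), Real.cos (φ + α)^2) = π := by
  have hpt : ∀ φ:ℝ, Real.cos (φ + α)^2 = 1/2 + (1/2)*Real.cos (2*φ + 2*α) := by
    intro φ; rw [Real.cos_sq, show 2*(φ+α) = 2*φ+2*α from by ring]; ring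
  simp only [hpt]
  rw [intervalIntegral.integral_add, intervalIntegral.integral_const_mul,
    myGc 2 (2*α) two_ne_zero (by simpa using myPer (2*α) 2), intervalIntegral.integral_const]
  · simp; ring
  all_goals apply Continuous.intervalIntegrable; fun_prop

lemma myP4 : (∫ φ in (0:ℝ)..(2*π), Real.cos (2*φ)^2) = π := by
  have hpt : ∀ φ:ℝ, Real.cos (2*φ)^2 = 1/2 + (1/2)*Real.cos (4*φ) := by
    intro φ; rw [Real.cos_sq, show 2*(2*φ) = 4*φ from by ring]; ring
  simp only [hpt]
  rw [intervalIntegral.integral_add, intervalIntegral.integral_const_mul, myP4',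
    intervalIntegral.integral_const]
  · simp; ring
  all_goals apply Continuous.intervalIntegrable; fun_prop

lemma myProd (x y : ℝ) : Real.cos x * Real.cos y = (1/2)*Real.cos (x+y) + (1/2)*Real.cos (x-y) := by
  rw [Real.cos_add, Real.cos_sub]; ring

lemma myP5 (α : ℝ) : (∫ φ in (0:ℝ)..(2*π), Real.cos (φ + α) * Real.cos (2*φ)) = 0 := by
  have hpt : ∀ φ:ℝ, Real.cos (φ + α) * Real.cos (2*φ)
      = (1/2)*Real.cos (3*φ + α) + (1/2)*Real.cos ((-1)*φ + α) := by
    intro φ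
    rw [myProd, show φ + α + 2*φ = 3*φ + α from by ring,
      show φ + α - 2*φ = (-1)*φ + α from by ring]
  simp only [hpt]
  rw [intervalIntegral.integral_add, intervalIntegral.integral_const_mul,
    intervalIntegral.integral_const_mul,
    myGc 3 α (by norm_num) (by simpa using myPer α 3),
    myGc (-1) α (by norm_num) (by rw [show (-1:ℝ)*(2*π)+α = α - 2*π from by ring,
      Real.sin_sub_two_pi])]
  · ring
  all_goals apply Continuous.intervalIntegrable; fun_prop

lemma myP6 (α : ℝ) : (∫ φ in (0:ℝ)..(2*π), Real.cos (φ + α)^2 * Real.cos (2*φ))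
    = π/2 * Real.cos (2*α) := by
  have hpt : ∀ φ:ℝ, Real.cos (φ + α)^2 * Real.cos (2*φ)
      = (1/2)*Real.cos (2*φ) + (1/4)*Real.cos (4*φ + 2*α) + (1/4)*Real.cos (2*α) := by
    intro φ
    have h1 : Real.cos (2*φ+2*α) * Real.cos (2*φ)
        = (1/2)*Real.cos (4*φ + 2*α) + (1/2)*Real.cos (2*α) := by
      rw [myProd, show 2*φ + 2*α + 2*φ = 4*φ + 2*α from by ring,
        show 2*φ + 2*α - 2*φ = 2*α from by ring]
    have h2 : Real.cos (φ + α)^2 = 1/2 + (1/2)*Real.cos (2*φ + 2*α) := by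
      rw [Real.cos_sq, show 2*(φ+α) = 2*φ+2*α from by ring]; ring
    linear_combination Real.cos (2*φ) * h2 + (1/2)*h1
  simp only [hpt]
  rw [intervalIntegral.integral_add, intervalIntegral.integral_add,
    intervalIntegral.integral_const_mul, intervalIntegral.integral_const_mul, myP2,
    myGc 4 (2*α) (by norm_num) (by simpa using myPer (2*α) 4), intervalIntegral.integral_const]
  · simp; ring
  all_goals apply Continuous.intervalIntegrable; fun_prop

lemma myP7 : (∫ φ in (0:ℝ)..(2*π), Real.cos (2*φ)^3) = 0 := by
  have hpt : ∀ φ:ℝ, Real.cos (2*φ)^3 = (3/4)*Real.cos (2*φ) + (1/4)*Real.cos (6*φ) := by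
    intro φ
    have h := Real.cos_three_mul (2*φ)
    rw [show 3*(2*φ) = 6*φ from by ring] at h
    linear_combination (-(1/4))*h
  simp only [hpt]
  rw [intervalIntegral.integral_add, intervalIntegral.integral_const_mul,
    intervalIntegral.integral_const_mul, myP2, myP7']
  · ring
  all_goals apply Continuous.intervalIntegrable; fun_prop

/-- **The cubic Casimir `C₃` in the zonal-case representation.** -/
theorem stmt14 (Ω A B D α : ℝ) :
    (∫ φ in (0:ℝ)..(2 * π), ∫ θ in (0:ℝ)..π,
      (vortZ Ω A B D α θ φ) ^ 3 * Real.sin θ) =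
    (A * (10 * A ^ 2 + 15 * B ^ 2 - 30 * D ^ 2 + 56 * Ω ^ 2 * π) +
      15 * Real.sqrt 3 * B ^ 2 * D * Real.cos (2 * α)) /
    (14 * Real.sqrt (5 * π)) := by
  have hφ : ∀ φ:ℝ, (∫ θ in (0:ℝ)..π, (vortZ Ω A B D α θ φ) ^ 3 * Real.sin θ)
      = (8/5*Ω^2*(A*Real.sqrt (5/(16*π))) + 32/35*(A*Real.sqrt (5/(16*π)))^3) + (3*π/4*(Ω*(A*Real.sqrt (5/(16*π)))*(B*Real.sqrt (15/(16*π))))) * Real.cos (φ + α) + (4/5*Ω^2*(D*Real.sqrt (15/(16*π))) + 16/7*(A*Real.sqrt (5/(16*π)))^2*(D*Real.sqrt (15/(16*π)))) * Real.cos (2*φ)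
        + (32/35*(A*Real.sqrt (5/(16*π)))*(B*Real.sqrt (15/(16*π)))^2) * Real.cos (φ + α)^2 + (-(64/35)*(A*Real.sqrt (5/(16*π)))*(D*Real.sqrt (15/(16*π)))^2) * Real.cos (2*φ)^2
        + (3*π/4*(Ω*(B*Real.sqrt (15/(16*π)))*(D*Real.sqrt (15/(16*π))))) * (Real.cos (φ + α) * Real.cos (2*φ))
        + (64/35*(B*Real.sqrt (15/(16*π)))^2*(D*Real.sqrt (15/(16*π)))) * (Real.cos (φ + α)^2 * Real.cos (2*φ))
        + (32/35*(D*Real.sqrt (15/(16*π)))^3) * Real.cos (2*φ)^3 := by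
    intro φ
    rw [show (∫ θ in (0:ℝ)..π, (vortZ Ω A B D α θ φ) ^ 3 * Real.sin θ)
        = ∫ θ in (0:ℝ)..π, (Ω * Real.cos θ + (A*Real.sqrt (5/(16*π))) * (3 * Real.cos θ ^ 2 - 1)
          + (B*Real.sqrt (15/(16*π))*Real.cos (φ+α)) * Real.sin (2*θ)
          + (D*Real.sqrt (15/(16*π))*Real.cos (2*φ)) * Real.sin θ ^ 2) ^ 3 * Real.sin θ
        from intervalIntegral.integral_congr (fun θ _ => by simp only [vortZ]; ring),
      myKey]
    ring
  simp only [hφ]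
  iterate 7 rw [intervalIntegral.integral_add]
  · simp only [intervalIntegral.integral_const_mul]
    rw [myP1 α, myP2, myP3 α, myP4, myP5 α, myP6 α, myP7, intervalIntegral.integral_const]
    simp only [smul_eq_mul, sub_zero]
    have hπ := Real.pi_pos
    have hkA2 : (Real.sqrt (5/(16*π)))^2 = 5/(16*π) := Real.sq_sqrt (by positivity)
    have hkApos : 0 < Real.sqrt (5/(16*π)) := Real.sqrt_pos.mpr (by positivity)
    have hkB : Real.sqrt (15/(16*π)) = Real.sqrt 3 * Real.sqrt (5/(16*π)) := by
      rw [show (15:ℝ)/(16*π) = 3*(5/(16*π)) from by ring]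
      exact Real.sqrt_mul (by norm_num) _
    have h3 : Real.sqrt 3 ^ 2 = 3 := Real.sq_sqrt (by norm_num)
    have h5π : Real.sqrt (5*π) = 5/(4*Real.sqrt (5/(16*π))) := by
      rw [eq_div_iff (by positivity)]
      rw [show Real.sqrt (5*π) * (4*Real.sqrt (5/(16*π))) = 4*(Real.sqrt (5*π) * Real.sqrt (5/(16*π))) from by ring,
        ← Real.sqrt_mul (by positivity) (5/(16*π)),
        show (5*π)*(5/(16*π)) = 25/16 from by field_simp; ring,
        show (25/16:ℝ) = (5/4)^2 from by norm_num, Real.sqrt_sq (by norm_num)]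
      norm_num
    rw [hkB, h5π,
      show (14:ℝ) * (5/(4*Real.sqrt (5/(16*π)))) = 35/(2*Real.sqrt (5/(16*π))) from by
        rw [eq_div_iff (by positivity : (2:ℝ)*Real.sqrt (5/(16*π)) ≠ 0)]
        field_simp
        ring,
      div_div_eq_mul_div]
    have hkA2' : 16*π*((Real.sqrt (5/(16*π)))^2) = 5 := by rw [hkA2]; field_simp
    linear_combination
      (Real.sqrt (5/(16*π))*((4/35)*A^3 + (6/35)*A*B^2 - (12/35)*A*D^2
        + (6/35)*Real.sqrt 3*B^2*D*Real.cos (2*α))) * hkA2'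
      + ((Real.sqrt (5/(16*π)))^3*((32*π/35)*A*B^2 - (64*π/35)*A*D^2
        + (32*π/35)*Real.sqrt 3*B^2*D*Real.cos (2*α))) * h3
  all_goals apply Continuous.intervalIntegrable; fun_prop
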